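/- Let G be a simple graph on n ≥ 6 vertices with m edges. If m ≥ 4n + 17, then the sum of the 4 largest Laplacian eigenvalues of G satisfies μ₁ + μ₂ + μ₃ + μ₄ ≤ m + 10, i.e., Brouwer's conjecture holds for k = 4. -/

import Mathlib

open Finset Matrix

lemma quad_le {n : ℕ} (G : SimpleGraph (Fin n)) [DecidableRel G.Adj] (x : Fin n → ℝ) :
    (∑ i : Fin n, ∑ j : Fin n, if G.Adj i j then (x i - x j)^2 else 0) / 2
      ≤ (n : ℝ) * ∑ i : Fin n, x i ^ 2 := by
  have h1 : (∑ i : Fin n, ∑ j : Fin n, if G.Adj i j then (x i - x j)^2 else 0)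
      ≤ ∑ i : Fin n, ∑ j : Fin n, (x i - x j)^2 := by
    apply Finset.sum_le_sum; intro i _
    apply Finset.sum_le_sum; intro j _
    split
    · exact le_rfl
    · positivity
  have h2 : ∑ i : Fin n, ∑ j : Fin n, (x i - x j)^2
      = 2 * n * (∑ i : Fin n, x i ^ 2) - 2 * (∑ i : Fin n, x i)^2 := by
    have e1 : ∀ i : Fin n, ∑ j : Fin n, (x i - x j)^2
        = (n : ℝ) * x i ^ 2 + (∑ j : Fin n, x j ^ 2) - 2 * (x i * ∑ j : Fin n, x j) := by
      intro i
      rw [Finset.mul_sum, Finset.mul_sum, show ((n:ℝ)) * x i ^2 = ∑ _j : Fin n, x i ^2 by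
        simp [Finset.sum_const, Finset.card_univ, mul_comm],
        ← Finset.sum_add_distrib, ← Finset.sum_sub_distrib]
      exact Finset.sum_congr rfl fun j _ => by ring
    simp_rw [e1]
    rw [Finset.sum_sub_distrib, Finset.sum_add_distrib, Finset.sum_const, Finset.card_univ,
      Fintype.card_fin, nsmul_eq_mul, ← Finset.mul_sum, ← Finset.mul_sum, ← Finset.sum_mul]
    ring
  nlinarith [sq_nonneg (∑ i : Fin n, x i)]

lemma psd_aux {n : ℕ} (G : SimpleGraph (Fin n)) [DecidableRel G.Adj] :
    Matrix.PosSemidef ((n : ℝ) • (1 : Matrix (Fin n) (Fin n) ℝ) - G.lapMatrix ℝ) := by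
  rw [Matrix.posSemidef_iff_dotProduct_mulVec]
  constructor
  · simp only [Matrix.IsHermitian, Matrix.conjTranspose_sub, Matrix.conjTranspose_smul,
      Matrix.conjTranspose_one, star_trivial, (SimpleGraph.posSemidef_lapMatrix ℝ G).1.eq]
  · intro x
    have key : dotProduct (star x) (G.lapMatrix ℝ *ᵥ x)
        = (∑ i : Fin n, ∑ j : Fin n, if G.Adj i j then (x i - x j)^2 else 0) / 2 := by
      rw [star_trivial, ← Matrix.toLinearMap₂'_apply', SimpleGraph.lapMatrix_toLinearMap₂' ℝ]
    have hx : dotProduct (star x) (x) = ∑ i : Fin n, x i ^ 2 := by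
      simp [dotProduct, sq]
    rw [Matrix.sub_mulVec, dotProduct_sub, Matrix.smul_mulVec,
      Matrix.one_mulVec, dotProduct_smul, key]
    simp only [RCLike.re_to_real, smul_eq_mul, hx]
    have := quad_le G x
    linarith

lemma eig_le {n : ℕ} (G : SimpleGraph (Fin n)) [DecidableRel G.Adj]
    (hL : (G.lapMatrix ℝ).IsHermitian) (i : Fin n) : hL.eigenvalues i ≤ n := by
  have hpsd := psd_aux G
  have h0 := hpsd.re_dotProduct_nonneg (⇑(hL.eigenvectorBasis i))
  have hv := hL.mulVec_eigenvectorBasis i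
  have hnorm : dotProduct (star ⇑(hL.eigenvectorBasis i)) ⇑(hL.eigenvectorBasis i)
      = 1 := by
    have := hL.eigenvectorBasis.orthonormal.1 i
    rw [EuclideanSpace.norm_eq] at this
    have h2 : ∑ j, (hL.eigenvectorBasis i j)^2 = 1 := by
      have := congrArg (· ^ 2) this
      simpa [Real.sq_sqrt (Finset.sum_nonneg fun j _ => sq_nonneg _), sq_abs] using this
    simpa [dotProduct, sq] using h2
  rw [Matrix.sub_mulVec, dotProduct_sub, Matrix.smul_mulVec,
    Matrix.one_mulVec, dotProduct_smul, hv, dotProduct_smul, hnorm] at h0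
  simp only [RCLike.re_to_real, smul_eq_mul, mul_one] at h0
  linarith

/-- For a simple graph on `n ≥ 6` vertices with `m ≥ 4n + 17`
edges, the sum of the four largest Laplacian eigenvalues is at most `m + 10`
(Brouwer's conjecture for `k = 4`). -/
theorem stmt19 {n : ℕ} (hn : 6 ≤ n) (G : SimpleGraph (Fin n)) [DecidableRel G.Adj]
    (m : ℕ) (hm : m = G.edgeFinset.card) (hm4 : 4 * n + 17 ≤ m)
    (hL : (G.lapMatrix ℝ).IsHermitian)
    (mu : Fin n → ℝ) (σ : Equiv.Perm (Fin n))
    (hmu : mu = hL.eigenvalues ∘ σ) (hdec : Antitone mu) :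
    mu ⟨0, by omega⟩ + mu ⟨1, by omega⟩ + mu ⟨2, by omega⟩ + mu ⟨3, by omega⟩ ≤
      (m : ℝ) + 10 := by
  have hb : ∀ i : Fin n, mu i ≤ n := by
    intro i; rw [hmu]; exact eig_le G hL (σ i)
  have hmn : (4 * n + 17 : ℝ) ≤ m := by exact_mod_cast hm4
  have h0 := hb ⟨0, by omega⟩
  have h1 := hb ⟨1, by omega⟩
  have h2 := hb ⟨2, by omega⟩
  have h3 := hb ⟨3, by omega⟩
  linarith
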